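/- Let X be a compact Hausdorff space that is contractible (the identity map of X is homotopic to a constant map). Then I_f(X) is contractible: the identity map of I_f(X) is homotopic to a constant map. -/

import Mathlib

open Real Set Topology

/-- The Dirac measure `δ_x` on `X`, as a functional on `C(X, ℝ)`: `δ_x(φ) = φ(x)`. -/
def dirac (X : Type*) [TopologicalSpace X] (x : X) : C(X, ℝ) → ℝ := fun φ => φ x

/-- The max-plus combination `⊕_{i=1}^n λ_i ⊙ δ_{x_i}`, i.e. the functional
`φ ↦ max_{1 ≤ i ≤ n} (λ_i + φ(x_i))`. -/
noncomputable def maxPlus {X : Type*} [TopologicalSpace X] {n : ℕ}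
    (lam : Fin n → ℝ) (x : Fin n → X) : C(X, ℝ) → ℝ :=
  fun φ => ⨆ i, (lam i + φ (x i))

/-- `μ : C(X, ℝ) → ℝ` is an idempotent probability measure:
(1) `μ(c_λ) = λ` for constant functions; (2) `μ(λ + φ) = λ + μ(φ)`;
(3) `μ(max(φ, ψ)) = max(μ(φ), μ(ψ))`. -/
def IsIPM {X : Type*} [TopologicalSpace X] (μ : C(X, ℝ) → ℝ) : Prop :=
  (∀ c : ℝ, μ (ContinuousMap.const X c) = c) ∧
  (∀ (c : ℝ) (φ : C(X, ℝ)), μ (ContinuousMap.const X c + φ) = c + μ φ) ∧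
  (∀ φ ψ : C(X, ℝ), μ (φ ⊔ ψ) = max (μ φ) (μ ψ))

/-- Membership in `I_ω(X)`: idempotent probability measures with finite support, i.e.
`μ = ⊕_{i=1}^n λ_i ⊙ δ_{x_i}` with `x_i` pairwise distinct, `λ_i ≤ 0` and `max_i λ_i = 0`. -/
def IsFS {X : Type*} [TopologicalSpace X] (μ : C(X, ℝ) → ℝ) : Prop :=
  ∃ n : ℕ, 0 < n ∧ ∃ (x : Fin n → X) (lam : Fin n → ℝ),
    Function.Injective x ∧ (∀ i, lam i ≤ 0) ∧ (∃ i, lam i = 0) ∧ μ = maxPlus lam x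

/-- Membership in `I_f(X)`: `μ = ⊕_{i=1}^n λ_i ⊙ δ_{x_i}` with `x_i` pairwise distinct,
a unique index `i₀` with `λ_{i₀} = 0`, and `λ_i ≤ -ln(n+1)` for every `i ≠ i₀`. -/
def IsIf {X : Type*} [TopologicalSpace X] (μ : C(X, ℝ) → ℝ) : Prop :=
  ∃ n : ℕ, 0 < n ∧ ∃ (x : Fin n → X) (lam : Fin n → ℝ) (i0 : Fin n),
    Function.Injective x ∧ lam i0 = 0 ∧
    (∀ i, i ≠ i0 → lam i ≤ -Real.log (n + 1)) ∧ μ = maxPlus lam x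

lemma bddA {n : ℕ} (f : Fin n → ℝ) : BddAbove (Set.range f) :=
  (Set.finite_range f).bddAbove

lemma isIf_lam_nonpos {n : ℕ} (lam : Fin n → ℝ) (i0 : Fin n) (h0 : lam i0 = 0)
    (hb : ∀ i, i ≠ i0 → lam i ≤ -Real.log (n + 1)) : ∀ i, lam i ≤ 0 := by
  intro i
  rcases eq_or_ne i i0 with rfl | hi
  · exact h0.le
  · have : (0:ℝ) ≤ Real.log (n + 1) :=
      Real.log_nonneg (le_add_of_nonneg_left (Nat.cast_nonneg n))
    linarith [hb i hi]

lemma lemA {X : Type*} [TopologicalSpace X] :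
    ∀ n : ℕ, 0 < n → ∀ (y : Fin n → X) (lam : Fin n → ℝ) (i0 : Fin n),
    lam i0 = 0 → (∀ i, i ≠ i0 → lam i ≤ -Real.log (n + 1)) →
    IsIf (maxPlus lam y) := by
  intro n
  induction n using Nat.strong_induction_on with
  | _ n IH =>
  intro hn y lam i0 h0 hb
  by_cases hinj : Function.Injective y
  · exact ⟨n, hn, y, lam, i0, hinj, h0, hb, rfl⟩
  have hlog : ∀ i, lam i ≤ 0 := isIf_lam_nonpos lam i0 h0 hb
  obtain ⟨a, b, hyab, hab⟩ := Function.not_injective_iff.mp hinj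
  obtain ⟨k, k', hki0, hkk', hyk, hlk⟩ :
      ∃ k k' : Fin n, k ≠ i0 ∧ k' ≠ k ∧ y k = y k' ∧ lam k ≤ lam k' := by
    rcases eq_or_ne a i0 with rfl | ha
    · exact ⟨b, a, Ne.symm hab, hab, hyab.symm, by rw [h0]; exact hlog b⟩
    rcases eq_or_ne b i0 with rfl | hb'
    · exact ⟨a, b, ha, hab.symm, hyab, by rw [h0]; exact hlog a⟩
    rcases le_total (lam a) (lam b) with h | h
    · exact ⟨a, b, ha, hab.symm, hyab, h⟩
    · exact ⟨b, a, hb', hab, hyab.symm, h⟩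
  obtain ⟨m, rfl⟩ : ∃ m, n = m + 1 := Nat.exists_eq_succ_of_ne_zero hn.ne'
  have hm : 0 < m := by
    rcases Nat.eq_zero_or_pos m with rfl | h
    · have h1 := k.isLt
      have h2 := k'.isLt
      exact absurd (Fin.ext (by omega)) hkk'
    · exact h
  have : Nonempty (Fin m) := Fin.pos_iff_nonempty.mp hm
  obtain ⟨j0, hj0⟩ := Fin.exists_succAbove_eq (Ne.symm hki0)
  obtain ⟨j1, hj1⟩ := Fin.exists_succAbove_eq hkk'
  have key : maxPlus lam y
      = maxPlus (lam ∘ Fin.succAbove k) (y ∘ Fin.succAbove k) := by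
    funext φ
    apply le_antisymm
    · refine ciSup_le fun i => ?_
      rcases eq_or_ne i k with rfl | hik
      · have h1 : lam i + φ (y i) ≤ lam k' + φ (y k') := by
          rw [hyk]; linarith
        refine h1.trans ?_
        have := le_ciSup
          (bddA fun j => (lam ∘ Fin.succAbove i) j + φ ((y ∘ Fin.succAbove i) j)) j1
        simpa [hj1, maxPlus] using this
      · obtain ⟨j, hj⟩ := Fin.exists_succAbove_eq hik
        have := le_ciSup
          (bddA fun j => (lam ∘ Fin.succAbove k) j + φ ((y ∘ Fin.succAbove k) j)) j
        simpa [hj, maxPlus] using this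
    · refine ciSup_le fun j => ?_
      exact le_ciSup (bddA fun i => lam i + φ (y i)) (k.succAbove j)
  rw [key]
  refine IH m (Nat.lt_succ_self m) hm _ _ j0 (by simp [Function.comp, hj0, h0]) ?_
  intro j hj
  have hne : Fin.succAbove k j ≠ i0 := by
    rw [← hj0]
    exact fun h => hj (Fin.succAbove_right_injective h)
  refine (hb _ hne).trans ?_
  have h1 : Real.log (m + 1) ≤ Real.log ((m:ℝ) + 1 + 1) :=
    Real.log_le_log (by positivity) (by linarith)
  push_cast
  linarith

lemma maxPlus_nonexp {X : Type*} [TopologicalSpace X] [CompactSpace X] {n : ℕ}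
    (hn : 0 < n) (lam : Fin n → ℝ) (x : Fin n → X) (φ ψ : C(X, ℝ)) :
    maxPlus lam x φ ≤ maxPlus lam x ψ + dist φ ψ := by
  have : Nonempty (Fin n) := Fin.pos_iff_nonempty.mp hn
  refine ciSup_le fun i => ?_
  have h1 : dist (φ (x i)) (ψ (x i)) ≤ dist φ ψ := ContinuousMap.dist_apply_le_dist _
  rw [Real.dist_eq] at h1
  have h2 : φ (x i) ≤ ψ (x i) + dist φ ψ := by
    have := abs_sub_le_iff.mp h1
    linarith [this.1]
  have h3 : lam i + ψ (x i) ≤ maxPlus lam x ψ :=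
    le_ciSup (bddA fun i => lam i + ψ (x i)) i
  calc lam i + φ (x i) ≤ (lam i + ψ (x i)) + dist φ ψ := by linarith
    _ ≤ maxPlus lam x ψ + dist φ ψ := by linarith

lemma isIf_nonexp {X : Type*} [TopologicalSpace X] [CompactSpace X]
    {μ : C(X, ℝ) → ℝ} (h : IsIf μ) (φ ψ : C(X, ℝ)) :
    dist (μ φ) (μ ψ) ≤ dist φ ψ := by
  obtain ⟨n, hn, x, lam, i0, _, _, _, rfl⟩ := h
  have h1 := maxPlus_nonexp hn lam x φ ψ
  have h2 := maxPlus_nonexp hn lam x ψ φ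
  rw [dist_comm ψ φ] at h2
  rw [Real.dist_eq, abs_sub_le_iff]
  exact ⟨by linarith, by linarith⟩

lemma isIf_const {X : Type*} [TopologicalSpace X] {μ : C(X, ℝ) → ℝ}
    (h : IsIf μ) (c : ℝ) : μ (ContinuousMap.const X c) = c := by
  obtain ⟨n, hn, x, lam, i0, _, h0, hb, rfl⟩ := h
  have : Nonempty (Fin n) := Fin.pos_iff_nonempty.mp hn
  have hle := isIf_lam_nonpos lam i0 h0 hb
  apply le_antisymm
  · refine ciSup_le fun i => ?_
    simpa using hle i
  · have := le_ciSup (bddA fun i => lam i + (ContinuousMap.const X c) (x i)) i0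
    simpa [h0, maxPlus] using this

/-- if the compact Hausdorff space `X` is contractible (the identity map of
`X` is homotopic to a constant map), then `I_f(X)` is contractible: the identity map of
`I_f(X)` is homotopic to a constant map. -/
theorem stmt14 {X : Type*} [TopologicalSpace X] [CompactSpace X] [T2Space X]
    (hX : ∃ x0 : X, Nonempty (ContinuousMap.Homotopy (ContinuousMap.id X)
      (ContinuousMap.const X x0))) :
    ∃ μ0 : {μ : C(X, ℝ) → ℝ // IsIf μ},
      Nonempty (ContinuousMap.Homotopy (ContinuousMap.id {μ : C(X, ℝ) → ℝ // IsIf μ})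
        (ContinuousMap.const {μ : C(X, ℝ) → ℝ // IsIf μ} μ0)) := by
  obtain ⟨x0, ⟨h⟩⟩ := hX
  set H : C(unitInterval × X, X) := h.toContinuousMap with hH
  -- the constant target measure: δ_{x0}
  have hμ0 : IsIf (maxPlus (fun _ : Fin 1 => (0:ℝ)) (fun _ => x0)) :=
    ⟨1, one_pos, fun _ => x0, fun _ => 0, 0,
      fun a b _ => Subsingleton.elim a b, rfl,
      fun i hi => absurd (Subsingleton.elim i 0) hi, rfl⟩
  refine ⟨⟨_, hμ0⟩, ?_⟩
  -- the pushforward map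
  have hpush : ∀ (p : unitInterval × {μ : C(X, ℝ) → ℝ // IsIf μ}),
      IsIf (fun φ : C(X, ℝ) => p.2.1 (φ.comp (H.curry p.1))) := by
    rintro ⟨t, μ, n, hn, x, lam, i0, hinj, h0, hb, hμ⟩
    have : (fun φ : C(X, ℝ) => μ (φ.comp (H.curry t)))
        = maxPlus lam (fun i => H.curry t (x i)) := by
      funext φ
      rw [hμ]
      rfl
    rw [this]
    exact lemA n hn _ lam i0 h0 hb
  have hcont : Continuous fun (p : unitInterval × {μ : C(X, ℝ) → ℝ // IsIf μ}) =>
      (fun φ : C(X, ℝ) => p.2.1 (φ.comp (H.curry p.1))) := by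
    refine continuous_pi fun φ => ?_
    set Ψ : C(unitInterval × X, ℝ) := φ.comp H with hΨ
    have hcur : ∀ t, φ.comp (H.curry t) = Ψ.curry t := fun t =>
      ContinuousMap.ext fun x => rfl
    simp only [hcur]
    rw [continuous_iff_continuousAt]
    intro p0
    rw [ContinuousAt, tendsto_iff_dist_tendsto_zero]
    have hkey : ∀ p : unitInterval × {μ : C(X, ℝ) → ℝ // IsIf μ},
        dist (p.2.1 (Ψ.curry p.1)) (p0.2.1 (Ψ.curry p0.1))
          ≤ dist (Ψ.curry p.1) (Ψ.curry p0.1)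
            + dist (p.2.1 (Ψ.curry p0.1)) (p0.2.1 (Ψ.curry p0.1)) := by
      intro p
      refine (dist_triangle _ (p.2.1 (Ψ.curry p0.1)) _).trans ?_
      exact add_le_add (isIf_nonexp p.2.2 _ _) le_rfl
    have hg : Continuous fun p : unitInterval × {μ : C(X, ℝ) → ℝ // IsIf μ} =>
        dist (Ψ.curry p.1) (Ψ.curry p0.1)
          + dist (p.2.1 (Ψ.curry p0.1)) (p0.2.1 (Ψ.curry p0.1)) := by
      refine Continuous.add ?_ ?_
      · exact (Ψ.curry.continuous.comp continuous_fst).dist continuous_const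
      · exact (((continuous_apply (Ψ.curry p0.1)).comp
          (continuous_subtype_val.comp continuous_snd)).dist continuous_const)
    have hg0 : Filter.Tendsto (fun p : unitInterval × {μ : C(X, ℝ) → ℝ // IsIf μ} =>
        dist (Ψ.curry p.1) (Ψ.curry p0.1)
          + dist (p.2.1 (Ψ.curry p0.1)) (p0.2.1 (Ψ.curry p0.1))) (nhds p0) (nhds 0) := by
      simpa using hg.tendsto p0
    exact squeeze_zero (fun p => dist_nonneg) hkey hg0
  refine ⟨⟨⟨fun p => ⟨fun φ => p.2.1 (φ.comp (H.curry p.1)), hpush p⟩,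
    hcont.subtype_mk _⟩, ?_, ?_⟩⟩
  · -- map_zero_left
    intro μ
    apply Subtype.ext
    funext φ
    show μ.1 (φ.comp (H.curry 0)) = μ.1 φ
    have h2 : φ.comp (H.curry 0) = φ := by
      ext x
      show φ (h (0, x)) = φ x
      rw [h.apply_zero]
      rfl
    rw [h2]
  · -- map_one_left
    intro μ
    apply Subtype.ext
    funext φ
    show μ.1 (φ.comp (H.curry 1)) = maxPlus (fun _ : Fin 1 => (0:ℝ)) (fun _ => x0) φ
    have h1 : φ.comp (H.curry 1) = ContinuousMap.const X (φ x0) := by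
      ext x
      show φ (h (1, x)) = φ x0
      rw [h.apply_one]
      rfl
    rw [h1, isIf_const μ.2]
    show φ x0 = ⨆ _ : Fin 1, ((0:ℝ) + φ x0)
    simp
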